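/- Suppose α < |a|_p = β and |a-d|_p < α for f(x)=(ax²+bx)/(x²+dx+b) on ℂ_p. Then the fixed point x₂ = a-d is indifferent (|f'(x₂)|_p = 1) and its Siegel disk equals the Siegel disk of 0, namely U_α(0): for every x with 0 < |x - x₂|_p < α one has |f(x)-x₂|_p = |x-x₂|_p. -/

import Mathlib

open IsUltrametricDist in
lemma stmt14_add_eq {K : Type*} [NontriviallyNormedField K] [IsUltrametricDist K]
    {x y : K} (h : ‖y‖ < ‖x‖) : ‖x + y‖ = ‖x‖ := by
  rw [norm_add_eq_max_of_norm_ne_norm (by linarith : ‖x‖ ≠ ‖y‖)]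
  exact max_eq_left h.le

/-- Case `α < |a| = β` with `|a-d| < α`: the fixed point `x₂ = a - d` is
indifferent (`|f'(x₂)| = 1`) and its Siegel disk equals the Siegel disk
`U_α(0)` of `0`: `|f(x) - x₂| = |x - x₂|` whenever `0 < |x - x₂| < α`. -/
theorem stmt14 {K : Type*} [NontriviallyNormedField K] [IsAlgClosed K]
    [IsUltrametricDist K] (a b d z₁ z₂ : K) (hab : a*b ≠ 0) (had : a ≠ d)
    (hsum : z₁ + z₂ = -d) (hprod : z₁ * z₂ = b)
    (hαa : ‖z₁‖ < ‖a‖) (haβ : ‖a‖ = ‖z₂‖) (hx₂ : ‖a - d‖ < ‖z₁‖) :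
    (∃ L : K, HasDerivAt (fun x : K => (a*x^2 + b*x)/(x^2 + d*x + b)) L (a - d) ∧
      ‖L‖ = 1) ∧
    ∀ x : K, 0 < ‖x - (a - d)‖ → ‖x - (a - d)‖ < ‖z₁‖ →
      ‖(a*x^2 + b*x)/(x^2 + d*x + b) - (a - d)‖ = ‖x - (a - d)‖ := by
  have ha : a ≠ 0 := fun h => hab (by rw [h]; ring)
  have hb : b ≠ 0 := fun h => hab (by rw [h]; ring)
  have hbn : ‖b‖ = ‖z₁‖ * ‖z₂‖ := by rw [← hprod, norm_mul]
  have hα : 0 < ‖z₁‖ := lt_of_le_of_lt (norm_nonneg _) hx₂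
  have hαβ : ‖z₁‖ < ‖z₂‖ := haβ ▸ hαa
  have hβ : 0 < ‖z₂‖ := hα.trans hαβ
  have hdn : ‖d‖ = ‖z₂‖ := by
    have : ‖d‖ = ‖z₂ + z₁‖ := by
      rw [show z₂ + z₁ = -d by rw [← hsum]; ring, norm_neg]
    rw [this, stmt14_add_eq hαβ]
  -- norm of denominator at points of norm < ‖z₁‖
  have hD : ∀ x : K, ‖x‖ < ‖z₁‖ → ‖x^2 + d*x + b‖ = ‖b‖ := by
    intro x hx
    have h1 : ‖x^2 + d*x‖ < ‖b‖ := by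
      refine lt_of_le_of_lt (IsUltrametricDist.norm_add_le_max _ _) ?_
      rw [max_lt_iff, hbn]
      constructor
      · rw [norm_pow]
        calc ‖x‖^2 ≤ ‖x‖ * ‖z₁‖ := by
              rw [pow_two]; exact mul_le_mul_of_nonneg_left hx.le (norm_nonneg _)
          _ < ‖z₁‖ * ‖z₂‖ := by
              apply mul_lt_mul' (le_of_lt hx) hαβ hα.le hα
      · rw [norm_mul, hdn, mul_comm]
        exact mul_lt_mul_of_pos_right hx hβ
    rw [show x^2 + d*x + b = b + (x^2 + d*x) by ring, stmt14_add_eq h1]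
  have hε : ‖a - d‖ < ‖z₁‖ := hx₂
  have hDε : ‖(a-d)^2 + d*(a-d) + b‖ = ‖b‖ := hD _ hε
  have hDεne : (a-d)^2 + d*(a-d) + b ≠ 0 := by
    intro h
    rw [h, norm_zero] at hDε
    exact hb (norm_eq_zero.mp hDε.symm)
  constructor
  · -- derivative part
    have hnum : HasDerivAt (fun x : K => a*x^2 + b*x) (2*a*(a-d) + b) (a-d) := by
      have h1 : HasDerivAt (fun x : K => a*x^2 + b*x) (a*(2*(a-d)^1) + b) (a-d) := by
        have := ((hasDerivAt_pow 2 (a-d)).const_mul a).add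
          ((hasDerivAt_id (a-d)).const_mul b)
        exact this.congr_deriv (by norm_num)
      convert h1 using 1; ring
    have hden : HasDerivAt (fun x : K => x^2 + d*x + b) (2*(a-d) + d) (a-d) := by
      have h1 := (((hasDerivAt_pow 2 (a-d)).add
        ((hasDerivAt_id (a-d)).const_mul d)).add_const b)
      simpa using h1
    have hdiv := hnum.div hden hDεne
    refine ⟨_, hdiv, ?_⟩
    have hNid : (2*a*(a-d) + b) * ((a-d)^2 + d*(a-d) + b)
        - (a*(a-d)^2 + b*(a-d)) * (2*(a-d) + d)
        = b^2 + ((a*d - b)*(a-d)^2 + (2*(a*b))*(a-d)) := by ring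
    have h2ab : ‖2*(a*b)‖ ≤ ‖a*b‖ := by
      have := IsUltrametricDist.norm_add_le_max (a*b) (a*b)
      simpa [two_mul] using this
    have hbb : ‖b‖^2 = ‖z₁‖^2 * ‖z₂‖^2 := by rw [hbn]; ring
    have hsmall : ‖(a*d - b)*(a-d)^2 + (2*(a*b))*(a-d)‖ < ‖b^2‖ := by
      refine lt_of_le_of_lt (IsUltrametricDist.norm_add_le_max _ _) ?_
      rw [max_lt_iff, norm_pow]
      constructor
      · rw [norm_mul, norm_pow]
        have h1 : ‖a*d - b‖ ≤ ‖z₂‖^2 := by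
          rw [sub_eq_add_neg]
          refine le_trans (IsUltrametricDist.norm_add_le_max _ _) ?_
          rw [norm_neg, max_le_iff]
          constructor
          · rw [norm_mul, haβ, hdn, pow_two]
          · rw [hbn, pow_two]
            exact mul_le_mul_of_nonneg_right hαβ.le hβ.le
        calc ‖a*d - b‖ * ‖a-d‖^2 ≤ ‖z₂‖^2 * ‖a-d‖^2 :=
              mul_le_mul_of_nonneg_right h1 (by positivity)
          _ < ‖z₂‖^2 * ‖z₁‖^2 := by
              apply mul_lt_mul_of_pos_left _ (by positivity)
              exact pow_lt_pow_left₀ hε (norm_nonneg _) two_ne_zero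
          _ = ‖b‖^2 := by rw [hbb]; ring
      · rw [norm_mul]
        calc ‖2*(a*b)‖ * ‖a-d‖ ≤ ‖a*b‖ * ‖a-d‖ :=
              mul_le_mul_of_nonneg_right h2ab (norm_nonneg _)
          _ < ‖a*b‖ * ‖z₁‖ := by
              exact mul_lt_mul_of_pos_left hε (norm_pos_iff.mpr hab)
          _ = ‖b‖^2 := by
              rw [norm_mul, haβ, hbn]; ring
    have hN : ‖(2*a*(a-d) + b) * ((a-d)^2 + d*(a-d) + b)
        - (a*(a-d)^2 + b*(a-d)) * (2*(a-d) + d)‖ = ‖b‖^2 := by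
      rw [hNid, stmt14_add_eq hsmall, norm_pow]
    rw [norm_div, hN, norm_pow, hDε]
    exact div_self (pow_ne_zero _ (norm_ne_zero_iff.mpr hb))
  · -- Siegel disk part
    intro x hx0 hx1
    have hxn : ‖x‖ < ‖z₁‖ := by
      have := IsUltrametricDist.norm_add_le_max (x - (a-d)) (a-d)
      simpa using lt_of_le_of_lt this (max_lt hx1 hε)
    have hDx : ‖x^2 + d*x + b‖ = ‖b‖ := hD x hxn
    have hDxne : x^2 + d*x + b ≠ 0 := by
      intro h; rw [h, norm_zero] at hDx
      exact hb (norm_eq_zero.mp hDx.symm)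
    have hdxb : ‖d*x + b‖ = ‖b‖ := by
      rw [show d*x + b = b + d*x by ring]
      refine stmt14_add_eq ?_
      rw [norm_mul, hdn, hbn, mul_comm]
      exact mul_lt_mul_of_pos_right hxn hβ
    have hkey : (a*x^2 + b*x)/(x^2 + d*x + b) - (a - d)
        = (x - (a-d)) * (d*x + b) / (x^2 + d*x + b) := by
      rw [eq_div_iff hDxne, sub_mul, div_mul_cancel₀ _ hDxne]
      ring
    rw [hkey, norm_div, norm_mul, hdxb, hDx, mul_div_assoc,
      div_self (norm_ne_zero_iff.mpr hb), mul_one]
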